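/- For each n ≥ 1, the trigonometric polynomial T_n(t) := cos t + cos((4n+1)t) + Σ_{k=0}^{n-1} (cos((4k+1)t) − cos((4k+3)t)) has exactly two zeros in the period [−π, π), namely simple zeros at t = −π/2 and t = π/2, and T_n(t) ≠ 0 for all other t in [−π, π). -/

import Mathlib

open Real Finset

private lemma prod_to_sum (a b : ℝ) :
    Real.cos a * Real.cos b = (Real.cos (a + b) + Real.cos (a - b)) / 2 := by
  rw [Real.cos_add, Real.cos_sub]; ring

private lemma key_identity (n : ℕ) (t : ℝ) :
    Real.cos t * (Real.cos t + Real.cos ((4 * n + 1) * t) +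
        ∑ k ∈ Finset.range n,
          (Real.cos ((4 * k + 1) * t) - Real.cos ((4 * k + 3) * t)))
    = Real.cos t ^ 2 + Real.cos ((2 * n + 1) * t) ^ 2 := by
  have hterm : ∀ k : ℕ,
      Real.cos t * (Real.cos ((4 * k + 1) * t) - Real.cos ((4 * k + 3) * t))
      = Real.cos ((4 * (k : ℝ)) * t) / 2 - Real.cos ((4 * ((k : ℝ) + 1)) * t) / 2 := by
    intro k
    have h1 := prod_to_sum ((4 * (k : ℝ) + 1) * t) t
    have h2 := prod_to_sum ((4 * (k : ℝ) + 3) * t) t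
    have e1 : (4 * (k : ℝ) + 1) * t + t = (4 * k + 2) * t := by ring
    have e2 : (4 * (k : ℝ) + 1) * t - t = (4 * k) * t := by ring
    have e3 : (4 * (k : ℝ) + 3) * t + t = (4 * (k + 1)) * t := by ring
    have e4 : (4 * (k : ℝ) + 3) * t - t = (4 * k + 2) * t := by ring
    rw [e1, e2] at h1; rw [e3, e4] at h2
    linarith [h1, h2]
  set f : ℕ → ℝ := fun k => Real.cos ((4 * (k : ℝ)) * t) / 2 with hf
  have hsum : Real.cos t * ∑ k ∈ Finset.range n,
      (Real.cos ((4 * k + 1) * t) - Real.cos ((4 * k + 3) * t))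
      = f 0 - f n := by
    rw [Finset.mul_sum]
    have step : (∑ k ∈ Finset.range n, Real.cos t *
        (Real.cos ((4 * k + 1) * t) - Real.cos ((4 * k + 3) * t)))
      = ∑ k ∈ Finset.range n, (f k - f (k + 1)) := by
      refine Finset.sum_congr rfl fun k _ => ?_
      have h := hterm k
      simp only [hf]
      push_cast
      push_cast at h
      linarith [h]
    rw [step]
    exact Finset.sum_range_sub' f n
  have h2 := prod_to_sum ((4 * (n : ℝ) + 1) * t) t
  have e1 : (4 * (n : ℝ) + 1) * t + t = (4 * n + 2) * t := by ring
  have e2 : (4 * (n : ℝ) + 1) * t - t = (4 * n) * t := by ring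
  rw [e1, e2] at h2
  have hsq1 : Real.cos t ^ 2 = Real.cos t * Real.cos t := sq (Real.cos t) ▸ by ring
  have hsq2 : Real.cos ((2 * (n : ℝ) + 1) * t) ^ 2
      = 1 / 2 + Real.cos ((4 * (n : ℝ) + 2) * t) / 2 := by
    rw [Real.cos_sq]
    ring_nf
  have hf0 : f 0 = 1 / 2 := by simp [hf]
  have hfn : f n = Real.cos ((4 * (n : ℝ)) * t) / 2 := rfl
  rw [mul_add, mul_add, hsum, hf0, hfn]
  nlinarith [h2, hsq2]

private lemma hc_cos (c x : ℝ) :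
    HasDerivAt (fun t => Real.cos (c * t)) (-(c * Real.sin (c * x))) x := by
  have h := ((hasDerivAt_id x).const_mul c).cos
  simpa [mul_comm] using h

private lemma s1 (k : ℕ) : Real.sin ((4 * (k : ℝ) + 1) * (Real.pi / 2)) = 1 := by
  have e : (4 * (k : ℝ) + 1) * (Real.pi / 2) = Real.pi / 2 + (k : ℤ) * (2 * Real.pi) := by
    push_cast; ring
  rw [e, Real.sin_add_int_mul_two_pi, Real.sin_pi_div_two]

private lemma s3 (k : ℕ) : Real.sin ((4 * (k : ℝ) + 3) * (Real.pi / 2)) = -1 := by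
  have e : (4 * (k : ℝ) + 3) * (Real.pi / 2)
      = (Real.pi / 2 + Real.pi) + (k : ℤ) * (2 * Real.pi) := by push_cast; ring
  rw [e, Real.sin_add_int_mul_two_pi, Real.sin_add_pi, Real.sin_pi_div_two]

private lemma c1 (k : ℕ) : Real.cos ((4 * (k : ℝ) + 1) * (Real.pi / 2)) = 0 := by
  have e : (4 * (k : ℝ) + 1) * (Real.pi / 2) = Real.pi / 2 + (k : ℤ) * (2 * Real.pi) := by
    push_cast; ring
  rw [e, Real.cos_add_int_mul_two_pi, Real.cos_pi_div_two]

private lemma c3 (k : ℕ) : Real.cos ((4 * (k : ℝ) + 3) * (Real.pi / 2)) = 0 := by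
  have e : (4 * (k : ℝ) + 3) * (Real.pi / 2)
      = (Real.pi / 2 + Real.pi) + (k : ℤ) * (2 * Real.pi) := by push_cast; ring
  rw [e, Real.cos_add_int_mul_two_pi, Real.cos_add_pi, Real.cos_pi_div_two, neg_zero]

theorem counterexample_two_simple_zeros (n : ℕ) (hn : 1 ≤ n) :
    let T : ℝ → ℝ := fun t =>
      Real.cos t + Real.cos ((4 * n + 1) * t) +
        ∑ k ∈ Finset.range n,
          (Real.cos ((4 * k + 1) * t) - Real.cos ((4 * k + 3) * t))
    T (-(Real.pi / 2)) = 0 ∧ T (Real.pi / 2) = 0 ∧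
      deriv T (-(Real.pi / 2)) ≠ 0 ∧ deriv T (Real.pi / 2) ≠ 0 ∧
      ∀ t ∈ Set.Ico (-Real.pi) Real.pi, T t = 0 → t = -(Real.pi / 2) ∨ t = Real.pi / 2 := by
  intro T
  have hπ := Real.pi_pos
  have hT : ∀ x : ℝ, HasDerivAt T
      (-Real.sin x + -((4 * (n : ℝ) + 1) * Real.sin ((4 * (n : ℝ) + 1) * x)) +
        ∑ k ∈ Finset.range n,
          (-((4 * (k : ℝ) + 1) * Real.sin ((4 * (k : ℝ) + 1) * x))
            - -((4 * (k : ℝ) + 3) * Real.sin ((4 * (k : ℝ) + 3) * x)))) x := by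
    intro x
    exact ((Real.hasDerivAt_cos x).add (hc_cos _ x)).add
      (HasDerivAt.fun_sum fun k _ => (hc_cos _ x).sub (hc_cos _ x))
  have hTpos : T (Real.pi / 2) = 0 := by
    show Real.cos (Real.pi / 2) + Real.cos ((4 * (n : ℝ) + 1) * (Real.pi / 2)) +
        ∑ k ∈ Finset.range n,
          (Real.cos ((4 * (k : ℝ) + 1) * (Real.pi / 2))
            - Real.cos ((4 * (k : ℝ) + 3) * (Real.pi / 2))) = 0
    rw [Real.cos_pi_div_two, c1 n,
      Finset.sum_eq_zero fun k _ => by rw [c1 k, c3 k]; ring]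
    ring
  have hTneg : T (-(Real.pi / 2)) = 0 := by
    show Real.cos (-(Real.pi / 2)) + Real.cos ((4 * (n : ℝ) + 1) * (-(Real.pi / 2))) +
        ∑ k ∈ Finset.range n,
          (Real.cos ((4 * (k : ℝ) + 1) * (-(Real.pi / 2)))
            - Real.cos ((4 * (k : ℝ) + 3) * (-(Real.pi / 2)))) = 0
    simp only [mul_neg, Real.cos_neg]
    rw [Real.cos_pi_div_two, c1 n,
      Finset.sum_eq_zero fun k _ => by rw [c1 k, c3 k]; ring]
    ring
  have hDpos : deriv T (Real.pi / 2)
      = -1 - (4 * (n : ℝ) + 1) + ∑ k ∈ Finset.range n, (-(4 * (k : ℝ) + 1) - (4 * (k : ℝ) + 3)) := by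
    rw [(hT (Real.pi / 2)).deriv, Real.sin_pi_div_two, s1 n,
      Finset.sum_congr rfl fun k _ => by rw [s1 k, s3 k]]
    rw [Finset.sum_congr rfl fun k (_ : k ∈ Finset.range n) => show
      -((4 * (k : ℝ) + 1) * 1) - -((4 * (k : ℝ) + 3) * -1) = -(4 * (k : ℝ) + 1) - (4 * (k : ℝ) + 3)
      from by ring]
    ring
  have hDneg : deriv T (-(Real.pi / 2))
      = 1 + (4 * (n : ℝ) + 1) + ∑ k ∈ Finset.range n, ((4 * (k : ℝ) + 1) + (4 * (k : ℝ) + 3)) := by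
    rw [(hT (-(Real.pi / 2))).deriv]
    simp only [mul_neg, Real.sin_neg]
    rw [Real.sin_pi_div_two, s1 n,
      Finset.sum_congr rfl fun k _ => by rw [s1 k, s3 k]]
    rw [Finset.sum_congr rfl fun k (_ : k ∈ Finset.range n) => show
      - -((4 * (k : ℝ) + 1) * 1) - - -((4 * (k : ℝ) + 3) * -1)
        = ((4 * (k : ℝ) + 1) + (4 * (k : ℝ) + 3)) from by ring]
    ring
  have hsum_le : ∑ k ∈ Finset.range n, (-(4 * (k : ℝ) + 1) - (4 * (k : ℝ) + 3)) ≤ 0 :=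
    Finset.sum_nonpos fun k _ => by
      have : (0 : ℝ) ≤ (k : ℝ) := Nat.cast_nonneg k
      linarith
  have hsum_ge : (0 : ℝ) ≤ ∑ k ∈ Finset.range n, ((4 * (k : ℝ) + 1) + (4 * (k : ℝ) + 3)) :=
    Finset.sum_nonneg fun k _ => by
      have : (0 : ℝ) ≤ (k : ℝ) := Nat.cast_nonneg k
      linarith
  have hn' : (0 : ℝ) ≤ (n : ℝ) := Nat.cast_nonneg n
  refine ⟨hTneg, hTpos, ?_, ?_, ?_⟩
  · rw [hDneg]; positivity
  · rw [hDpos]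
    intro h
    linarith
  · intro t ht hTt
    have hkey : Real.cos t * T t
        = Real.cos t ^ 2 + Real.cos ((2 * (n : ℝ) + 1) * t) ^ 2 := key_identity n t
    rw [hTt, mul_zero] at hkey
    have hcsq : Real.cos t ^ 2 = 0 := by
      nlinarith [sq_nonneg (Real.cos t), sq_nonneg (Real.cos ((2 * (n : ℝ) + 1) * t))]
    have hcos : Real.cos t = 0 := by
      have := sq_eq_zero_iff.mp (by rw [sq]; nlinarith [hcsq] : Real.cos t ^ 2 = 0)
      exact this
    obtain ⟨k, hk⟩ := Real.cos_eq_zero_iff.mp hcos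
    obtain ⟨h1, h2⟩ := ht
    rw [hk] at h1 h2
    have hk1 : (-2 : ℝ) ≤ 2 * (k : ℝ) + 1 := by nlinarith
    have hk2 : (2 * (k : ℝ) + 1) < 2 := by nlinarith
    have hk1' : (-2 : ℤ) ≤ 2 * k + 1 := by exact_mod_cast hk1
    have hk2' : (2 * k + 1 : ℤ) < 2 := by exact_mod_cast hk2
    have : k = -1 ∨ k = 0 := by omega
    rcases this with rfl | rfl
    · left; rw [hk]; push_cast; ring
    · right; rw [hk]; push_cast; ring
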